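/- Let V be a complex vector space equipped with a commutative associative ℂ-bilinear multiplication ∘ with unit element e ≠ 0. Let k : V → V be a conjugate-linear map with k ∘ k = id, and let μ ∈ ℂ with k(e) = μ·e. For Z ∈ V define φ_Z : V → V by φ_Z(Y) = −Z ∘ Y. Assume that for all Z₁, Z₂ ∈ V the commutator [φ_{Z₁}, k∘φ_{Z₂}∘k] annihilates e, i.e. φ_{Z₁}(k(φ_{Z₂}(k(e)))) = k(φ_{Z₂}(k(φ_{Z₁}(e)))). Then: (1) |μ| = 1; (2) k(Z₁ ∘ Z₂) = conj(μ)·k(Z₁) ∘ k(Z₂) for all Z₁, Z₂ ∈ V; (3) k ∘ φ_Z ∘ k = conj(μ)·φ_{k(Z)} for all Z ∈ V; (4) [φ_{Z₁}, k∘φ_{Z₂}∘k] = 0 on all of V, for all Z₁, Z₂ ∈ V. -/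

import Mathlib

/-- let `(V, ∘, e)` be a commutative associative unital ℂ-algebra with
`e ≠ 0`, `k` a conjugate-linear involution with `k(e) = μ·e`, and suppose the
commutator `[φ_{Z₁}, k ∘ φ_{Z₂} ∘ k]` (with `φ_Z(Y) = −Z ∘ Y`) annihilates `e` for all
`Z₁, Z₂`. Then `|μ| = 1`, `k(Z₁ ∘ Z₂) = conj(μ)·k(Z₁) ∘ k(Z₂)`,
`k ∘ φ_Z ∘ k = conj(μ)·φ_{k(Z)}`, and `[φ_{Z₁}, k ∘ φ_{Z₂} ∘ k] = 0` on all of `V`. -/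
theorem stmt10 {V : Type*} [AddCommGroup V] [Module ℂ V]
    (circ : V →ₗ[ℂ] V →ₗ[ℂ] V)
    (hcomm : ∀ x y, circ x y = circ y x)
    (hassoc : ∀ x y z, circ (circ x y) z = circ x (circ y z))
    (e : V) (he : e ≠ 0) (hunit : ∀ x, circ e x = x)
    (k : V →ₛₗ[starRingEnd ℂ] V) (hk : ∀ v, k (k v) = v)
    (μ : ℂ) (hke : k e = μ • e)
    (hcome : ∀ Z₁ Z₂ : V,
      -circ Z₁ (k (-circ Z₂ (k e))) = k (-circ Z₂ (k (-circ Z₁ e)))) :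
    ‖μ‖ = 1 ∧
    (∀ Z₁ Z₂ : V, k (circ Z₁ Z₂) = (starRingEnd ℂ) μ • circ (k Z₁) (k Z₂)) ∧
    (∀ Z Y : V, k (-circ Z (k Y)) = (starRingEnd ℂ) μ • -circ (k Z) Y) ∧
    (∀ Z₁ Z₂ Y : V,
      -circ Z₁ (k (-circ Z₂ (k Y))) = k (-circ Z₂ (k (-circ Z₁ Y)))) := by
  have hmule : ∀ x, circ x e = x := fun x => (hcomm x e).trans (hunit x)
  -- key identity (A): conj μ • Z₁ ∘ k Z₂ = k (Z₂ ∘ k Z₁)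
  have hA : ∀ Z₁ Z₂ : V,
      (starRingEnd ℂ) μ • circ Z₁ (k Z₂) = k (circ Z₂ (k Z₁)) := by
    intro Z₁ Z₂
    have h := hcome Z₁ Z₂
    rw [hke] at h
    simp only [map_neg, map_smul, LinearMap.map_smulₛₗ, LinearMap.neg_apply,
      LinearMap.smul_apply, hmule, neg_neg] at h
    simpa using h
  -- |μ|² = 1
  have hmu : (starRingEnd ℂ) μ * μ = 1 := by
    have h := hA e e
    rw [hunit, hk, hke, smul_smul] at h
    -- h : (conj μ * μ) • e = e
    by_contra hne
    have : ((starRingEnd ℂ) μ * μ - 1) • e = 0 := by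
      rw [sub_smul, one_smul, h, sub_self]
    rcases smul_eq_zero.mp this with h1 | h1
    · exact hne (by linear_combination h1)
    · exact he h1
  have habs : ‖μ‖ = 1 := by
    have : (Complex.normSq μ : ℂ) = 1 := by
      rw [Complex.normSq_eq_conj_mul_self]; exact hmu
    have h2 : Complex.normSq μ = 1 := by exact_mod_cast this
    rw [Complex.norm_def, h2, Real.sqrt_one]
  -- (2)
  have h2 : ∀ Z₁ Z₂ : V, k (circ Z₁ Z₂) = (starRingEnd ℂ) μ • circ (k Z₁) (k Z₂) := by
    intro Z₁ Z₂
    have h := hA (k Z₂) Z₁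
    rw [hk] at h
    rw [← h, hcomm]
  -- (3)
  have h3 : ∀ Z Y : V, k (-circ Z (k Y)) = (starRingEnd ℂ) μ • -circ (k Z) Y := by
    intro Z Y
    rw [map_neg, h2, hk, smul_neg]
  refine ⟨habs, h2, h3, fun Z₁ Z₂ Y => ?_⟩
  have hL : -circ Z₁ (k (-circ Z₂ (k Y)))
      = (starRingEnd ℂ) μ • circ Z₁ (circ (k Z₂) Y) := by
    rw [h3, smul_neg, map_neg, map_smul, neg_neg]
  have hR : k (-circ Z₂ (k (-circ Z₁ Y)))
      = (starRingEnd ℂ) μ • circ (k Z₂) (circ Z₁ Y) := by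
    rw [h3 Z₂ (-circ Z₁ Y)]
    simp
  rw [hL, hR, ← hassoc, hcomm Z₁ (k Z₂), hassoc]
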